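/- If C∖{0} ∩ L(𝒫) ≠ ∅, where L(𝒫) is the lineality space of the upper image 𝒫 of (VLP), then no minimizer for (VLP) exists: there is no point x̄ ∈ S with Px̄ ∉ P[S] + C∖{0}, and no direction x̄ ∈ (0⁺S)∖{0} with Px̄ ∉ P[0⁺S] + C∖{0}. -/

import Mathlib

open Matrix Set Pointwise

noncomputable section

/-- `cone B = {l • x : l ≥ 0, x ∈ conv B}` -/
def coneOf {E : Type*} [AddCommGroup E] [Module ℝ E] (B : Set E) : Set E :=
  {y | ∃ l : ℝ, 0 ≤ l ∧ ∃ x ∈ convexHull ℝ B, y = l • x}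

/-- `F` is a face of the convex set `B`. -/
def IsFaceOf {E : Type*} [AddCommGroup E] [Module ℝ E] (F B : Set E) : Prop :=
  Convex ℝ F ∧ F ⊆ B ∧
    ∀ y ∈ B, ∀ z ∈ B, ∀ l : ℝ, 0 < l → l < 1 → l • y + (1 - l) • z ∈ F → y ∈ F ∧ z ∈ F

/-- recession cone `0⁺B` of a convex set. -/
def recCone {E : Type*} [AddCommGroup E] [Module ℝ E] (B : Set E) : Set E :=
  {d | ∀ x ∈ B, ∀ t : ℝ, 0 ≤ t → x + t • d ∈ B}

/-- lineality space `L(B) = 0⁺B ∩ (−0⁺B)`. -/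
def linealOf {E : Type*} [AddCommGroup E] [Module ℝ E] (B : Set E) : Set E :=
  recCone B ∩ -recCone B

/-- dimension of (the affine hull of) a set. -/
def sdim {E : Type*} [AddCommGroup E] [Module ℝ E] (B : Set E) : ℕ :=
  Module.finrank ℝ (vectorSpan ℝ B)

def IsPolyhedron {d : ℕ} (B : Set (Fin d → ℝ)) : Prop :=
  ∃ (k : ℕ) (W : Matrix (Fin k) (Fin d) ℝ) (v : Fin k → ℝ), B = {x | v ≤ W.mulVec x}

/-- orthogonal complement (as a set) of a set of vectors. -/
def orthSet {d : ℕ} (L : Set (Fin d → ℝ)) : Set (Fin d → ℝ) :=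
  {y | ∀ z ∈ L, y ⬝ᵥ z = 0}

/-- polar cone `K° = {w : ∀ y ∈ K, wᵀy ≤ 0}`. -/
def polarCone {d : ℕ} (K : Set (Fin d → ℝ)) : Set (Fin d → ℝ) :=
  {w | ∀ y ∈ K, w ⬝ᵥ y ≤ 0}

/-- the last index of `Fin q` (1-based index `q`). -/
def lastIdx (q : ℕ) (hq : 0 < q) : Fin q := ⟨q - 1, by omega⟩

/-- `y ↦ (y,1)`. -/
def lift1 {q : ℕ} (y : Fin q → ℝ) : Fin (q + 1) → ℝ := Fin.snoc y 1

/-- `y ↦ (y,0)`. -/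
def lift0 {q : ℕ} (y : Fin q → ℝ) : Fin (q + 1) → ℝ := Fin.snoc y 0

/-- `p(y) = (y₁,…,y_q)`. -/
def projq {q : ℕ} (y : Fin (q + 1) → ℝ) : Fin q → ℝ := fun i => y i.castSucc

/-- `Φ(B) = cl cone (B × {1})`. -/
def PhiMap {q : ℕ} (B : Set (Fin q → ℝ)) : Set (Fin (q + 1) → ℝ) :=
  closure (coneOf (lift1 '' B))

/-- the block matrix `G = (A; −ZᵀP; 0)`. -/
def Gmat {m n q r : ℕ} (A : Matrix (Fin m) (Fin n) ℝ) (P : Matrix (Fin q) (Fin n) ℝ)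
    (Z : Matrix (Fin q) (Fin r) ℝ) : Matrix (Fin (m + r + 1)) (Fin n) ℝ :=
  fun i j =>
    if h : (i : ℕ) < m then A ⟨i, h⟩ j
    else if h2 : (i : ℕ) < m + r then -(∑ l : Fin q, Z l ⟨(i : ℕ) - m, by omega⟩ * P l j)
    else 0

/-- the block matrix `H` with rows `(0, −b)`, `(Zᵀ, 0)` and `(0,…,0,1)`. -/
def Hmat {m q r : ℕ} (b : Fin m → ℝ) (Z : Matrix (Fin q) (Fin r) ℝ) :
    Matrix (Fin (m + r + 1)) (Fin (q + 1)) ℝ :=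
  fun i j =>
    if h : (i : ℕ) < m then (if (j : ℕ) = q then -b ⟨i, h⟩ else 0)
    else if h2 : (i : ℕ) < m + r then
      (if hj : (j : ℕ) < q then Z ⟨j, hj⟩ ⟨(i : ℕ) - m, by omega⟩ else 0)
    else (if (j : ℕ) = q then 1 else 0)

/-- dual objective `D(u,w) = (w₁,…,w_{q−1}, bᵀu)`. -/
def Dmap {m q : ℕ} (b : Fin m → ℝ) (uw : (Fin m → ℝ) × (Fin q → ℝ)) : Fin q → ℝ :=
  fun i => if (i : ℕ) < q - 1 then uw.2 i else b ⬝ᵥ uw.1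

/-- `R* = {v : v₁ = ⋯ = v_{q−1} = 0, v_q ≥ 0}`. -/
def RstarSet (q : ℕ) (hq : 0 < q) : Set (Fin q → ℝ) :=
  {v | (∀ i : Fin q, (i : ℕ) < q - 1 → v i = 0) ∧ 0 ≤ v (lastIdx q hq)}

/-- dual feasible set `T`. -/
def Tset {m n q r : ℕ} (A : Matrix (Fin m) (Fin n) ℝ) (P : Matrix (Fin q) (Fin n) ℝ)
    (Z : Matrix (Fin q) (Fin r) ℝ) (cbar : Fin q → ℝ) :
    Set ((Fin m → ℝ) × (Fin q → ℝ)) :=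
  {uw | ∃ v : Fin r → ℝ, 0 ≤ v ∧ uw.2 = Z.mulVec v ∧
    Aᵀ.mulVec uw.1 = Pᵀ.mulVec uw.2 ∧ cbar ⬝ᵥ uw.2 = 1 ∧ 0 ≤ uw.1}

/-- `φ(y,w) = Σ_{i<q} y_i w_i + y_q (1 − Σ_{i<q} c̄_i w_i) − w_q`. -/
def phiFn {q : ℕ} (hq : 0 < q) (cbar : Fin q → ℝ) (y w : Fin q → ℝ) : ℝ :=
  (∑ i : Fin q, if (i : ℕ) < q - 1 then y i * w i else 0)
    + y (lastIdx q hq) * (1 - ∑ i : Fin q, if (i : ℕ) < q - 1 then cbar i * w i else 0)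
    - w (lastIdx q hq)

/-- duality map `Ψ(F*) = ⋂_{w ∈ F*} {y ∈ Pset : φ(y,w) = 0}`. -/
def PsiMap {q : ℕ} (hq : 0 < q) (cbar : Fin q → ℝ) (Pset : Set (Fin q → ℝ))
    (Fstar : Set (Fin q → ℝ)) : Set (Fin q → ℝ) :=
  ⋂ w ∈ Fstar, {y ∈ Pset | phiFn hq cbar y w = 0}

/-- `My = (−y₁,…,−y_{q−1}, c̄₁y₁+⋯+c̄_{q−1}y_{q−1} − y_{q+1}, y_q)`. -/
def Mmap {q : ℕ} (hq : 0 < q) (cbar : Fin q → ℝ) (y : Fin (q + 1) → ℝ) : Fin (q + 1) → ℝ :=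
  fun i =>
    if (i : ℕ) < q - 1 then -y i
    else if (i : ℕ) = q - 1 then
      (∑ j : Fin q, if (j : ℕ) < q - 1 then cbar j * y j.castSucc else 0) - y (Fin.last q)
    else y ((lastIdx q hq).castSucc)

/-- `M⁻¹w = (−w₁,…,−w_{q−1}, w_{q+1}, −cᵀw)` where `c = (c̄,0)`. -/
def MinvMap {q : ℕ} (cbar : Fin q → ℝ) (w : Fin (q + 1) → ℝ) : Fin (q + 1) → ℝ :=
  fun i =>
    if (i : ℕ) < q - 1 then -w i
    else if (i : ℕ) = q - 1 then w (Fin.last q)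
    else -((Fin.snoc cbar 0 : Fin (q + 1) → ℝ) ⬝ᵥ w)

/-- `p*(w) = (w₁,…,w_{q−1},w_{q+1})`. -/
def pstarMap {q : ℕ} (w : Fin (q + 1) → ℝ) : Fin q → ℝ :=
  fun i => if (i : ℕ) < q - 1 then w i.castSucc else w (Fin.last q)

/-- `y` generates an extreme ray of the pointed convex cone `Q`. -/
def IsExtremeDir {E : Type*} [AddCommGroup E] [Module ℝ E] (Q : Set E) (y : E) : Prop :=
  y ∈ Q ∧ y ≠ 0 ∧ IsFaceOf (coneOf {y}) Q

/-- `σ(u,w) = (u¹, −p(w))` where `u = (u¹,u²,u³) ∈ ℝ^m×ℝ^r×ℝ`. -/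
def sigmaMap {m q r : ℕ} (uw : (Fin (m + r + 1) → ℝ) × (Fin (q + 1) → ℝ)) :
    (Fin m → ℝ) × (Fin q → ℝ) :=
  (fun i => uw.1 (Fin.castLE (by omega) i), -projq uw.2)


lemma cone_carath_aux {ρ E : Type*} [Fintype ρ] [DecidableEq ρ] [AddCommGroup E] [Module ℝ E]
    (w : ρ → E) (N : ℕ) :
    ∀ t : ρ → ℝ, (Finset.univ.filter fun r => t r ≠ 0).card ≤ N → 0 ≤ t →
    ∃ s : Finset ρ, LinearIndependent ℝ (fun i : s => w i) ∧
      ∃ t' : ρ → ℝ, 0 ≤ t' ∧ (∀ i ∉ s, t' i = 0) ∧ ∑ r, t' r • w r = ∑ r, t r • w r := by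
  induction N with
  | zero =>
    intro t hcard ht
    have hzero : ∀ r, t r = 0 := by
      intro r
      by_contra hr
      have : r ∈ Finset.univ.filter fun r => t r ≠ 0 := by simp [hr]
      have := Finset.card_pos.mpr ⟨r, this⟩
      omega
    exact ⟨∅, linearIndependent_empty_type, t, ht, fun i _ => hzero i, rfl⟩
  | succ N ih =>
    intro t hcard ht
    set s : Finset ρ := Finset.univ.filter fun r => t r ≠ 0 with hs
    by_cases hind : LinearIndependent ℝ (fun i : s => w i)
    · refine ⟨s, hind, t, ht, fun i hi => ?_, rfl⟩
      by_contra h0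
      exact hi (by simp [hs, h0])
    · obtain ⟨g0, hg0sum, i0, hg0i0⟩ := Fintype.not_linearIndependent_iff.mp hind
      have key : ∀ g : s → ℝ, (∑ i, g i • w (i : ρ)) = 0 → ∀ i1 : s, 0 < g i1 →
          ∃ s' : Finset ρ, LinearIndependent ℝ (fun i : s' => w i) ∧
          ∃ t' : ρ → ℝ, 0 ≤ t' ∧ (∀ i ∉ s', t' i = 0) ∧ ∑ r, t' r • w r = ∑ r, t r • w r := by
        intro g hgsum i1 hgi1
        classical
        set gh : ρ → ℝ := fun r => if h : r ∈ s then g ⟨r, h⟩ else 0 with hgh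
        have ghsupp : ∀ r ∉ s, gh r = 0 := by intro r hr; simp [hgh, hr]
        have ghsum : ∑ r, gh r • w r = 0 := by
          rw [← Finset.sum_subset (Finset.subset_univ s)
            (by intro r _ hr; rw [ghsupp r hr, zero_smul])]
          rw [← Finset.sum_attach s (fun r => gh r • w r)]
          rw [← hgsum]
          refine Finset.sum_congr rfl fun i _ => ?_
          simp [hgh, i.2]
        -- the positive-coefficient set
        set sp : Finset ρ := s.filter (fun r => 0 < gh r) with hsp
        have hspne : sp.Nonempty := ⟨i1, by simp [hsp, hgh, i1.2, hgi1]⟩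
        obtain ⟨r0, hr0mem, hr0min⟩ := Finset.exists_min_image sp (fun r => t r / gh r) hspne
        have hr0s : r0 ∈ s := (Finset.mem_filter.mp hr0mem).1
        have hgr0 : 0 < gh r0 := (Finset.mem_filter.mp hr0mem).2
        set τ : ℝ := t r0 / gh r0 with hτ
        have hτ0 : 0 ≤ τ := div_nonneg (ht r0) hgr0.le
        set t2 : ρ → ℝ := fun r => t r - τ * gh r with ht2
        have ht2nn : 0 ≤ t2 := by
          intro r
          simp only [ht2, Pi.zero_apply, sub_nonneg]
          by_cases hrp : 0 < gh r
          · by_cases hrs : r ∈ s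
            · have := hr0min r (Finset.mem_filter.mpr ⟨hrs, hrp⟩)
              calc τ * gh r ≤ (t r / gh r) * gh r := by
                    exact mul_le_mul_of_nonneg_right this hrp.le
                _ = t r := div_mul_cancel₀ _ hrp.ne'
            · have : t r ≠ 0 → r ∈ s := by intro h; simp [hs, h]
              have htr : t r = 0 := by by_contra h; exact hrs (this h)
              -- r ∉ s means gh r = 0, contradiction with 0 < gh r
              exact absurd (ghsupp r hrs) hrp.ne'
          · have : τ * gh r ≤ 0 := mul_nonpos_of_nonneg_of_nonpos hτ0 (not_lt.mp hrp)
            exact this.trans (ht r)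
        have ht2sum : ∑ r, t2 r • w r = ∑ r, t r • w r := by
          simp only [ht2, sub_smul, Finset.sum_sub_distrib, mul_smul]
          rw [← Finset.smul_sum, ghsum, smul_zero, sub_zero]
        have ht2r0 : t2 r0 = 0 := by
          simp only [ht2, hτ]
          field_simp
          ring
        have hsub : (Finset.univ.filter fun r => t2 r ≠ 0) ⊆ s.erase r0 := by
          intro r hr
          simp only [Finset.mem_filter] at hr
          refine Finset.mem_erase.mpr ⟨?_, ?_⟩
          · rintro rfl; exact hr.2 ht2r0
          · by_contra hrs
            exact hr.2 (by simp [ht2, ghsupp r hrs, show t r = 0 by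
              by_contra h; exact hrs (by simp [hs, h])])
        have hcard2 : (Finset.univ.filter fun r => t2 r ≠ 0).card ≤ N := by
          have h1 := Finset.card_le_card hsub
          have h2 : (s.erase r0).card = s.card - 1 := Finset.card_erase_of_mem hr0s
          have h3 : 0 < s.card := Finset.card_pos.mpr ⟨r0, hr0s⟩
          omega
        obtain ⟨s', hli, t', h1, h2, h3⟩ := ih t2 hcard2 ht2nn
        exact ⟨s', hli, t', h1, h2, h3.trans ht2sum⟩
      rcases lt_or_gt_of_ne hg0i0 with hneg | hpos
      · refine key (-g0) ?_ i0 (by simpa using hneg)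
        simp [← Finset.sum_neg_distrib, neg_smul] at hg0sum ⊢
        simpa [neg_smul] using congrArg Neg.neg hg0sum
      · exact key g0 hg0sum i0 hpos

lemma cone_carath {ρ E : Type*} [Fintype ρ] [DecidableEq ρ] [AddCommGroup E] [Module ℝ E]
    (w : ρ → E) (t : ρ → ℝ) (ht : 0 ≤ t) :
    ∃ s : Finset ρ, LinearIndependent ℝ (fun i : s => w i) ∧
      ∃ t' : ρ → ℝ, 0 ≤ t' ∧ (∀ i ∉ s, t' i = 0) ∧ ∑ r, t' r • w r = ∑ r, t r • w r :=
  cone_carath_aux w _ t le_rfl ht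

lemma fg_cone_closed {ρ E : Type*} [Fintype ρ] [DecidableEq ρ] [NormedAddCommGroup E]
    [NormedSpace ℝ E] (w : ρ → E) :
    IsClosed {x : E | ∃ t : ρ → ℝ, 0 ≤ t ∧ x = ∑ r, t r • w r} := by
  classical
  have hdecomp : {x : E | ∃ t : ρ → ℝ, 0 ≤ t ∧ x = ∑ r, t r • w r}
      = ⋃ (s : Finset ρ) (_ : LinearIndependent ℝ (fun i : s => w i)),
        (fun u : s → ℝ => ∑ i, u i • w (i : ρ)) '' {u | 0 ≤ u} := by
    ext x
    simp only [mem_setOf_eq, mem_iUnion, mem_image]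
    constructor
    · rintro ⟨t, ht, rfl⟩
      obtain ⟨s, hli, t', h1, h2, h3⟩ := cone_carath w t ht
      refine ⟨s, hli, fun i => t' i, fun i => h1 i, ?_⟩
      rw [← h3, ← Finset.sum_subset (Finset.subset_univ s)
        (by intro r _ hr; rw [h2 r hr, zero_smul]),
        ← Finset.sum_attach s (fun r => t' r • w r)]
      rw [Finset.univ_eq_attach]
    · rintro ⟨s, hli, u, hu, rfl⟩
      refine ⟨fun r => if h : r ∈ s then u ⟨r, h⟩ else 0, ?_, ?_⟩
      · intro r; by_cases h : r ∈ s <;> simp [h]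
        exact hu _
      · rw [← Finset.sum_subset (Finset.subset_univ s)
          (by intro r _ hr; simp [hr]),
          ← Finset.sum_attach s (fun r => (if h : r ∈ s then u ⟨r, h⟩ else 0) • w r)]
        refine Finset.sum_congr rfl fun i _ => by simp [i.2]
  rw [hdecomp]
  refine isClosed_iUnion_of_finite fun s => isClosed_iUnion_of_finite fun hli => ?_
  have horth : IsClosed {u : s → ℝ | 0 ≤ u} := by
    have : {u : s → ℝ | 0 ≤ u} = ⋂ i, {u : s → ℝ | 0 ≤ u i} := by
      ext u; simp [Pi.le_def]
    rw [this]
    exact isClosed_iInter fun i => isClosed_le continuous_const (continuous_apply i)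
  set L : (s → ℝ) →ₗ[ℝ] E :=
    { toFun := fun u => ∑ i, u i • w (i : ρ)
      map_add' := by intro a b; simp [add_smul, Finset.sum_add_distrib]
      map_smul' := by intro c a; simp [mul_smul, Finset.smul_sum] }
  have hker : LinearMap.ker L = ⊥ := by
    rw [LinearMap.ker_eq_bot']
    intro u hu
    have := Fintype.linearIndependent_iff.mp hli u hu
    funext i; exact this i
  exact ((L.isClosedEmbedding_of_injective hker).isClosedMap) _ horth

lemma farkasAux {ι η : Type*} [Fintype ι] [Fintype η] [DecidableEq ι] [DecidableEq η]
    (M : Matrix ι η ℝ) (g : ι → ℝ)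
    (h : ∀ y : ι → ℝ, 0 ≤ y → M.vecMul y = 0 → y ⬝ᵥ g ≤ 0) :
    ∃ d : η → ℝ, g ≤ M.mulVec d := by
  classical
  set w : (η ⊕ η) ⊕ ι → (ι → ℝ) := fun r =>
    Sum.elim (Sum.elim (fun j i => M i j) (fun j i => -M i j)) (fun i0 => -Pi.single i0 1) r
    with hw
  set K : Set (ι → ℝ) := {x | ∃ t : (η ⊕ η) ⊕ ι → ℝ, 0 ≤ t ∧ x = ∑ r, t r • w r} with hK
  have hKconv : Convex ℝ K := by
    rintro x ⟨t, ht, rfl⟩ y ⟨u, hu, rfl⟩ a c ha hc _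
    refine ⟨fun r => a * t r + c * u r, fun r => ?_, ?_⟩
    · have h1 : 0 ≤ t r := ht r
      have h2 : 0 ≤ u r := hu r
      positivity
    · rw [Finset.smul_sum, Finset.smul_sum, ← Finset.sum_add_distrib]
      exact Finset.sum_congr rfl fun r _ => by
        simp [add_smul, mul_smul]
  have hKclosed : IsClosed K := fg_cone_closed w
  by_cases hg : g ∈ K
  · obtain ⟨t, ht, hgt⟩ := hg
    refine ⟨fun j => t (Sum.inl (Sum.inl j)) - t (Sum.inl (Sum.inr j)), fun i => ?_⟩
    have hgi := congrFun hgt i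
    simp only [Finset.sum_apply, Pi.smul_apply, smul_eq_mul] at hgi
    rw [Fintype.sum_sum_type, Fintype.sum_sum_type] at hgi
    simp only [hw, Sum.elim_inl, Sum.elim_inr, Pi.neg_apply, mul_neg] at hgi
    have hsin : ∑ i0, -(t (Sum.inr i0) * (Pi.single i0 1 : ι → ℝ) i) ≤ 0 := by
      refine Finset.sum_nonpos fun i0 _ => neg_nonpos.mpr (mul_nonneg (ht _) ?_)
      rw [Pi.single_apply]; split <;> norm_num
    have hMd : (M.mulVec (fun j => t (Sum.inl (Sum.inl j)) - t (Sum.inl (Sum.inr j)))) i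
        = ∑ j, t (Sum.inl (Sum.inl j)) * M i j + ∑ j, -(t (Sum.inl (Sum.inr j)) * M i j) := by
      rw [Matrix.mulVec, dotProduct, ← Finset.sum_add_distrib]
      exact Finset.sum_congr rfl fun j _ => by ring
    rw [hgi, hMd]
    linarith [hsin]
  · obtain ⟨f, u, hfK, hfg⟩ := geometric_hahn_banach_closed_point hKconv hKclosed hg
    have h0K : (0 : ι → ℝ) ∈ K := ⟨0, le_rfl, by simp⟩
    have hu0 : 0 < u := by simpa using hfK 0 h0K
    have hgen : ∀ r, f (w r) ≤ 0 := by
      intro r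
      by_contra hpos
      push_neg at hpos
      have hmem : (u / f (w r)) • w r ∈ K := by
        refine ⟨fun r' => if r' = r then u / f (w r) else 0, fun r' => ?_, ?_⟩
        · by_cases h' : r' = r <;> simp [h']
          exact le_of_lt (div_pos hu0 hpos)
        · refine Eq.symm ?_
          rw [Finset.sum_eq_single r (fun r' _ hne => by simp [hne]) (by simp)]
          simp
      have h2 := hfK _ hmem
      rw [f.map_smul, smul_eq_mul, div_mul_cancel₀ _ hpos.ne'] at h2
      exact lt_irrefl u h2
    have hsingle : ∀ i : ι, (Pi.single i 1 : ι → ℝ) = fun j => if i = j then 1 else 0 :=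
      fun i => funext fun j => by rw [Pi.single_apply]; simp [eq_comm]
    set y : ι → ℝ := fun i => f (Pi.single i 1) with hy
    have hy0 : (0 : ι → ℝ) ≤ y := by
      intro i
      have h3 := hgen (Sum.inr i)
      simp only [hw, Sum.elim_inr] at h3
      rw [map_neg] at h3
      exact neg_nonpos.mp h3
    have hfrep : ∀ a : ι → ℝ, f a = y ⬝ᵥ a := by
      intro a
      rw [dotProduct]
      conv_lhs => rw [pi_eq_sum_univ a]
      rw [map_sum]
      refine Finset.sum_congr rfl fun i _ => ?_
      rw [← hsingle i, f.map_smul, smul_eq_mul, mul_comm]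
    have hvM : M.vecMul y = 0 := by
      funext j
      have h1 := hgen (Sum.inl (Sum.inl j))
      have h2 := hgen (Sum.inl (Sum.inr j))
      simp only [hw, Sum.elim_inl, Sum.elim_inr] at h1 h2
      rw [hfrep] at h1 h2
      have hneg : (fun i => -M i j) = -(fun i => M i j) := by funext i; simp
      rw [hneg, dotProduct_neg] at h2
      have h4 : y ⬝ᵥ (fun i => M i j) = 0 := le_antisymm h1 (by linarith)
      rw [Matrix.vecMul, Pi.zero_apply, ← h4]
    have h5 := h y hy0 hvM
    rw [← hfrep g] at h5
    linarith

/-- If `C∖{0} ∩ L(𝒫) ≠ ∅` then no minimizer for (VLP) exists. -/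
theorem stmt9
    (m n q : ℕ) (hm : 0 < m) (hn : 0 < n) (hq : 0 < q)
    (A : Matrix (Fin m) (Fin n) ℝ) (P : Matrix (Fin q) (Fin n) ℝ) (b : Fin m → ℝ)
    (C : Set (Fin q → ℝ)) (hCpoly : IsPolyhedron C) (hCcone : C = coneOf C)
    (hCpointed : C ∩ -C = {0}) (hCnontriv : C ≠ {0})
    (S : Set (Fin n → ℝ)) (hS : S = {x | b ≤ A.mulVec x}) (hSne : S.Nonempty)
    (UpImg : Set (Fin q → ℝ)) (hUp : UpImg = P.mulVec '' S + C)
    (hviol : ((C \ {0}) ∩ linealOf UpImg).Nonempty) :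
    (¬ ∃ x ∈ S, P.mulVec x ∉ P.mulVec '' S + (C \ {0})) ∧
    (¬ ∃ x ∈ recCone S \ {0}, P.mulVec x ∉ P.mulVec '' recCone S + (C \ {0})) := by
    classical
  obtain ⟨c, hcC, hclin⟩ := hviol
  have hcC' : c ∈ C := hcC.1
  have hc0 : c ≠ 0 := by simpa using hcC.2
  have hrecpos : c ∈ recCone UpImg := hclin.1
  have hrecneg : -c ∈ recCone UpImg := by
    have h2 := hclin.2
    rwa [Set.mem_neg] at h2
  -- basic facts about C
  have hCsmul : ∀ (a : ℝ), 0 ≤ a → ∀ z ∈ C, a • z ∈ C := by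
    intro a ha z hz
    rw [hCcone]
    exact ⟨a, ha, z, subset_convexHull ℝ C hz, rfl⟩
  have hC0 : (0 : Fin q → ℝ) ∈ C := by
    have := hCsmul 0 le_rfl c hcC'
    simpa using this
  have hCadd : ∀ z1 ∈ C, ∀ z2 ∈ C, z1 + z2 ∈ C := by
    intro z1 h1 z2 h2
    rw [hCcone]
    refine ⟨2, by norm_num, (1/2 : ℝ) • z1 + (1/2 : ℝ) • z2, ?_, by module⟩
    exact (convex_convexHull ℝ C) (subset_convexHull ℝ C h1) (subset_convexHull ℝ C h2)
      (by norm_num) (by norm_num) (by norm_num)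
  have hCpt : ∀ z ∈ C, -z ∈ C → z = 0 := by
    intro z hz hnz
    have hmem : z ∈ C ∩ -C := ⟨hz, by rwa [Set.mem_neg]⟩
    rw [hCpointed] at hmem
    exact hmem
  obtain ⟨x0, hx0S⟩ := hSne
  have hPx0 : P.mulVec x0 ∈ UpImg := by
    rw [hUp]
    have := Set.add_mem_add (Set.mem_image_of_mem P.mulVec hx0S) hC0
    simpa using this
  -- Part 1
  have part1 : ¬ ∃ x ∈ S, P.mulVec x ∉ P.mulVec '' S + (C \ {0}) := by
    rintro ⟨x, hxS, hxno⟩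
    apply hxno
    have hPx : P.mulVec x ∈ UpImg := by
      rw [hUp]
      have := Set.add_mem_add (Set.mem_image_of_mem P.mulVec hxS) hC0
      simpa using this
    have hmem := hrecneg (P.mulVec x) hPx 1 zero_le_one
    rw [hUp] at hmem
    obtain ⟨p1, ⟨y, hyS, rfl⟩, e, heC, heq⟩ := Set.mem_add.mp hmem
    -- heq : P y + e = P x + 1 • (-c)
    rw [one_smul] at heq
    have heq' : P.mulVec x = P.mulVec y + (e + c) := by
      linear_combination -heq
    have hne : e + c ≠ 0 := by
      intro h0
      have hec : -c = e := by linear_combination -h0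
      exact hc0 (hCpt c hcC' (hec ▸ heC))
    rw [heq']
    exact Set.add_mem_add (Set.mem_image_of_mem P.mulVec hyS) ⟨hCadd _ heC _ hcC', by simpa using hne⟩
  -- recession cone of S
  have hSrec : recCone S = {d | 0 ≤ A.mulVec d} := by
    ext d
    constructor
    · intro hd
      have hall : ∀ t : ℝ, 0 ≤ t → b ≤ A.mulVec x0 + t • A.mulVec d := by
        intro t ht
        have := hd x0 hx0S t ht
        rw [hS] at this
        simpa [Matrix.mulVec_add, Matrix.mulVec_smul] using this
      intro i
      by_contra hneg
      push_neg at hneg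
      simp only [Pi.zero_apply] at hneg
      have hb0 : b i ≤ A.mulVec x0 i := by
        rw [hS] at hx0S; exact hx0S i
      set t : ℝ := (A.mulVec x0 i - b i + 1) / (-(A.mulVec d i)) with htdef
      have ht0 : 0 ≤ t := div_nonneg (by linarith) (by linarith)
      have := hall t ht0 i
      simp only [Pi.add_apply, Pi.smul_apply, smul_eq_mul] at this
      have hne' : -(A.mulVec d i) ≠ 0 := by linarith
      have htmul : t * A.mulVec d i = -(A.mulVec x0 i - b i + 1) := by
        rw [htdef, div_mul_eq_mul_div, div_eq_iff hne']
        ring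
      rw [htmul] at this
      linarith
    · intro hd x hx t ht
      rw [hS] at hx ⊢
      intro i
      have h1 : (0:ℝ) ≤ t * A.mulVec d i := mul_nonneg ht (hd i)
      have := hx i
      simp only [Matrix.mulVec_add, Matrix.mulVec_smul, Pi.add_apply, Pi.smul_apply, smul_eq_mul]
      linarith
  -- polyhedral description of C
  obtain ⟨kC, W, v, hCrep⟩ := hCpoly
  have hv0 : v ≤ 0 := by
    have h1 := hC0
    rw [hCrep] at h1
    simpa using h1
  have hCW : C = {z | 0 ≤ W.mulVec z} := by
    ext z
    constructor
    · intro hz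
      have hall : ∀ t : ℝ, 0 ≤ t → v ≤ t • W.mulVec z := by
        intro t ht
        have := hCsmul t ht z hz
        rw [hCrep] at this
        simpa [Matrix.mulVec_smul] using this
      intro i
      by_contra hneg
      push_neg at hneg
      simp only [Pi.zero_apply] at hneg
      set t : ℝ := (-(v i) + 1) / (-(W.mulVec z i)) with htdef
      have hvi : v i ≤ 0 := hv0 i
      have ht0 : 0 ≤ t := div_nonneg (by linarith) (by linarith)
      have := hall t ht0 i
      simp only [Pi.smul_apply, smul_eq_mul] at this
      have hne' : -(W.mulVec z i) ≠ 0 := by linarith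
      have htmul : t * W.mulVec z i = -(-(v i) + 1) := by
        rw [htdef, div_mul_eq_mul_div, div_eq_iff hne']
        ring
      rw [htmul] at this
      linarith
    · intro hz
      rw [hCrep]
      exact le_trans hv0 hz
  -- the key claim : -c ∈ P[recCone S] + C, via Farkas
  have hkey : ∃ d : Fin n → ℝ, d ∈ recCone S ∧ -c - P.mulVec d ∈ C := by
    set Mk : Matrix (Fin m ⊕ Fin kC) (Fin n) ℝ :=
      Matrix.of fun i j => Sum.elim (fun i' => A i' j) (fun l => -((W * P) l j)) i with hMk
    set g : Fin m ⊕ Fin kC → ℝ := Sum.elim 0 (W.mulVec c) with hg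
    have hfark : ∀ y : Fin m ⊕ Fin kC → ℝ, 0 ≤ y → Mk.vecMul y = 0 → y ⬝ᵥ g ≤ 0 := by
      intro y hy0 hvm
      set u : Fin m → ℝ := fun i => y (Sum.inl i) with hu
      set vv : Fin kC → ℝ := fun l => y (Sum.inr l) with hvv
      have hbal : A.vecMul u = (W * P).vecMul vv := by
        funext j
        have := congrFun hvm j
        rw [Matrix.vecMul, dotProduct, Fintype.sum_sum_type] at this
        simp only [hMk, Matrix.of_apply, Sum.elim_inl, Sum.elim_inr, mul_neg, Pi.zero_apply] at this
        rw [Matrix.vecMul, Matrix.vecMul, dotProduct, dotProduct]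
        rw [Finset.sum_neg_distrib] at this
        linarith [this]
      -- suppose γ > 0, contradiction
      by_contra hpos
      push_neg at hpos
      have hydot : y ⬝ᵥ g = vv ⬝ᵥ W.mulVec c := by
        rw [dotProduct, Fintype.sum_sum_type]
        simp [hg, dotProduct, hvv]
      rw [hydot] at hpos
      set γ : ℝ := vv ⬝ᵥ W.mulVec c with hγ
      -- bound: for all t ≥ 0, u ⬝ᵥ b ≤ β - t γ
      set β : ℝ := vv ⬝ᵥ W.mulVec (P.mulVec x0) with hβ
      have hbound : ∀ t : ℝ, 0 ≤ t → u ⬝ᵥ b ≤ β - t * γ := by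
        intro t ht
        have hmem := hrecneg (P.mulVec x0) hPx0 t ht
        rw [hUp] at hmem
        obtain ⟨p1, ⟨xt, hxtS, rfl⟩, e, heC, heq⟩ := Set.mem_add.mp hmem
        -- heq : P xt + e = P x0 + t • (-c)
        have hPxt : P.mulVec xt = P.mulVec x0 - t • c - e := by
          have h := eq_sub_of_add_eq heq
          rw [h, smul_neg]
          abel
        have h1 : u ⬝ᵥ b ≤ u ⬝ᵥ A.mulVec xt := by
          rw [dotProduct, dotProduct]
          refine Finset.sum_le_sum fun i _ => ?_
          have hbi : b i ≤ A.mulVec xt i := by rw [hS] at hxtS; exact hxtS i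
          exact mul_le_mul_of_nonneg_left hbi (hy0 (Sum.inl i))
        have h2 : u ⬝ᵥ A.mulVec xt = vv ⬝ᵥ W.mulVec (P.mulVec xt) := by
          rw [Matrix.dotProduct_mulVec, hbal, ← Matrix.dotProduct_mulVec,
            ← Matrix.mulVec_mulVec]
        have h3 : vv ⬝ᵥ W.mulVec (P.mulVec xt) = β - t * γ - vv ⬝ᵥ W.mulVec e := by
          rw [hPxt]
          simp only [Matrix.mulVec_sub, Matrix.mulVec_smul, dotProduct_sub,
            dotProduct_smul, smul_eq_mul, hβ, hγ]
        have h4 : 0 ≤ vv ⬝ᵥ W.mulVec e := by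
          rw [dotProduct]
          refine Finset.sum_nonneg fun l _ => mul_nonneg (hy0 (Sum.inr l)) ?_
          have : e ∈ {z | 0 ≤ W.mulVec z} := hCW ▸ heC
          exact this l
        linarith
      have hb0 := hbound 0 le_rfl
      set t : ℝ := (β - u ⬝ᵥ b + 1) / γ with htdef
      have ht0 : 0 ≤ t := div_nonneg (by linarith) hpos.le
      have := hbound t ht0
      have htg : t * γ = β - u ⬝ᵥ b + 1 := by
        rw [htdef]; field_simp
      rw [htg] at this
      linarith
    obtain ⟨d, hd⟩ := farkasAux Mk g hfark
    refine ⟨d, ?_, ?_⟩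
    · rw [hSrec]
      intro i
      have := hd (Sum.inl i)
      simpa [hg, hMk, Matrix.mulVec, dotProduct] using this
    · rw [hCW]
      intro l
      have := hd (Sum.inr l)
      simp only [hg, Sum.elim_inr] at this
      have hrow : Mk.mulVec d (Sum.inr l) = -((W * P).mulVec d l) := by
        simp [hMk, Matrix.mulVec, dotProduct, Finset.sum_neg_distrib]
      rw [hrow] at this
      have hgoal : W.mulVec (-c - P.mulVec d) = -(W.mulVec c) - (W * P).mulVec d := by
        rw [Matrix.mulVec_sub, Matrix.mulVec_neg, Matrix.mulVec_mulVec]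
      rw [hgoal]
      simp only [Pi.sub_apply, Pi.neg_apply, Pi.zero_apply]
      linarith
  -- Part 2
  refine ⟨part1, ?_⟩
  rintro ⟨x, ⟨hxrec, hxne⟩, hxno⟩
  apply hxno
  obtain ⟨d', hd'rec, hd'C⟩ := hkey
  have hsum : x + d' ∈ recCone S := by
    intro z hz t ht
    have h1 := hxrec z hz t ht
    have h2 := hd'rec _ h1 t ht
    have : z + t • x + t • d' = z + t • (x + d') := by
      rw [smul_add]; abel
    rwa [this] at h2
  have heq' : P.mulVec x = P.mulVec (x + d') + (c + (-c - P.mulVec d')) := by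
    rw [Matrix.mulVec_add]
    abel
  have hne : c + (-c - P.mulVec d') ≠ 0 := by
    intro h0
    have hPd : P.mulVec d' = 0 := by linear_combination -h0
    rw [hPd, sub_zero] at hd'C
    exact hc0 (hCpt c hcC' hd'C)
  rw [heq']
  exact Set.add_mem_add (Set.mem_image_of_mem P.mulVec hsum)
    ⟨hCadd _ hcC' _ hd'C, by simpa using hne⟩
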